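/- Let T ∈ M_{m,loc}(Z) be a metric current with locally finite mass. Then for all (f, π_1, …, π_m) ∈ Lip_bs(Z) × Lip_loc(Z)^m, |T(f,π_1,…,π_m)| ≤ (∏_{i=1}^m Lip(π_i|_{spt f})) · ∫_Z |f| d‖T‖. -/

import Mathlib

open Metric Filter MeasureTheory ENNReal Bornology Topology

variable {Z : Type*} [MetricSpace Z]

/-- Bounded-support Lipschitz real functions. -/
def LipBS {Z : Type*} [MetricSpace Z] (f : Z → ℝ) : Prop :=
  (∃ K : NNReal, LipschitzWith K f) ∧ IsBounded (tsupport f)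

/-- Functions Lipschitz on bounded subsets. -/
def LipLoc {Z : Type*} [MetricSpace Z] (f : Z → ℝ) : Prop :=
  ∀ s : Set Z, IsBounded s → ∃ K : NNReal, LipschitzOnWith K f s

/-- Multilinearity of a functional on `Lip_bs(Z) × Lip_loc(Z)^m`. -/
def IsMultilinearFunctional {Z : Type*} [MetricSpace Z] {m : ℕ}
    (T : (Z → ℝ) → (Fin m → Z → ℝ) → ℝ) : Prop :=
  (∀ f g π, LipBS f → LipBS g → (∀ i, LipLoc (π i)) →
      T (f + g) π = T f π + T g π) ∧
  (∀ (c : ℝ) f π, LipBS f → (∀ i, LipLoc (π i)) → T (c • f) π = c * T f π) ∧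
  (∀ f π (i : Fin m) (g g' : Z → ℝ), LipBS f → (∀ j, LipLoc (π j)) → LipLoc g → LipLoc g' →
      T f (Function.update π i (g + g')) =
        T f (Function.update π i g) + T f (Function.update π i g')) ∧
  (∀ f π (i : Fin m) (c : ℝ) (g : Z → ℝ), LipBS f → (∀ j, LipLoc (π j)) → LipLoc g →
      T f (Function.update π i (c • g)) = c * T f (Function.update π i g))

/-- Metric functional: multilinear, continuous and local (Definition 2.1). -/
def IsMetricFunctional {Z : Type*} [MetricSpace Z] {m : ℕ}
    (T : (Z → ℝ) → (Fin m → Z → ℝ) → ℝ) : Prop :=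
  IsMultilinearFunctional T ∧
  (∀ f (π : Fin m → Z → ℝ) (πj : ℕ → Fin m → Z → ℝ),
      LipBS f → (∀ i, LipLoc (π i)) → (∀ j i, LipLoc (πj j i)) →
      (∀ i z, Tendsto (fun j => πj j i z) atTop (𝓝 (π i z))) →
      (∀ s : Set Z, IsBounded s → ∃ K : NNReal, ∀ i j, LipschitzOnWith K (πj j i) s) →
      Tendsto (fun j => T f (πj j)) atTop (𝓝 (T f π))) ∧
  (∀ f π, LipBS f → (∀ i, LipLoc (π i)) →
      (∃ i : Fin m, ∃ δ : ℝ, 0 < δ ∧ ∀ z w : Z,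
        infDist z (tsupport f) ≤ δ → infDist w (tsupport f) ≤ δ → π i z = π i w) →
      T f π = 0)

/-- The mass of `T` in a set `V`. -/
noncomputable def massIn {Z : Type*} [MetricSpace Z] {m : ℕ}
    (T : (Z → ℝ) → (Fin m → Z → ℝ) → ℝ) (V : Set Z) : ℝ≥0∞ :=
  ⨆ p : {q : (n : ℕ) × (Fin n → (Z → ℝ) × (Fin m → Z → ℝ)) //
      (∀ i, LipBS (q.2 i).1 ∧ tsupport (q.2 i).1 ⊆ V ∧
        ∀ k, LipschitzWith 1 ((q.2 i).2 k)) ∧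
      (∀ z, (∑ i : Fin q.1, |(q.2 i).1 z|) ≤ 1)},
    ENNReal.ofReal (∑ i : Fin p.1.1, T ((p.1.2 i).1) ((p.1.2 i).2))

/-- The outer measure `‖T‖`. -/
noncomputable def normT {Z : Type*} [MetricSpace Z] {m : ℕ}
    (T : (Z → ℝ) → (Fin m → Z → ℝ) → ℝ) (A : Set Z) : ℝ≥0∞ :=
  ⨅ (V : Set Z) (_ : IsOpen V ∧ A ⊆ V), massIn T V

/-- Finite mass on bounded sets, concentrated near compact sets
(membership condition for `M_{m,loc}(Z)`). -/
def MlocCond {Z : Type*} [MetricSpace Z] {m : ℕ}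
    (T : (Z → ℝ) → (Fin m → Z → ℝ) → ℝ) : Prop :=
  ∀ U : Set Z, IsOpen U → IsBounded U → ∀ ε : ℝ, 0 < ε →
    ∃ C : Set Z, IsCompact C ∧ C ⊆ U ∧ massIn T U < ⊤ ∧
      massIn T (U \ C) < ENNReal.ofReal ε

section Helpers

variable {Z : Type*} [MetricSpace Z]

lemma lipBS_zero : LipBS (0 : Z → ℝ) := by
  refine ⟨⟨0, LipschitzWith.const' 0⟩, ?_⟩
  have : tsupport (0 : Z → ℝ) = ∅ := by
    simp [tsupport]
  rw [this]; exact Bornology.isBounded_empty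

lemma tsupport_add_subset' {f g : Z → ℝ} :
    tsupport (f + g) ⊆ tsupport f ∪ tsupport g := by
  rw [tsupport, tsupport, tsupport, ← closure_union]
  exact closure_mono (Function.support_add f g)

lemma lipBS_add {f g : Z → ℝ} (hf : LipBS f) (hg : LipBS g) : LipBS (f + g) := by
  obtain ⟨⟨Kf, hKf⟩, hbf⟩ := hf
  obtain ⟨⟨Kg, hKg⟩, hbg⟩ := hg
  exact ⟨⟨Kf + Kg, hKf.add hKg⟩, (hbf.union hbg).subset tsupport_add_subset'⟩

lemma tsupport_const_smul_subset' (c : ℝ) (f : Z → ℝ) :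
    tsupport (c • f) ⊆ tsupport f := by
  apply closure_mono
  intro z hz
  simp only [Function.mem_support, Pi.smul_apply, smul_eq_mul] at hz ⊢
  intro h0; exact hz (by rw [h0, mul_zero])

lemma lipschitzWith_const_smul {K : NNReal} {f : Z → ℝ} (c : ℝ) (hf : LipschitzWith K f) :
    LipschitzWith (Real.nnabs c * K) (c • f) := by
  rw [lipschitzWith_iff_dist_le_mul] at hf ⊢
  intro x y
  simp only [Pi.smul_apply, smul_eq_mul, Real.dist_eq, ← mul_sub, abs_mul]
  calc |c| * |f x - f y| ≤ |c| * (K * dist x y) := by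
        exact mul_le_mul_of_nonneg_left (by simpa [Real.dist_eq] using hf x y) (abs_nonneg c)
    _ = (Real.nnabs c * K : NNReal) * dist x y := by
        push_cast [Real.coe_nnabs]; ring

lemma lipBS_smul {f : Z → ℝ} (c : ℝ) (hf : LipBS f) : LipBS (c • f) := by
  obtain ⟨⟨Kf, hKf⟩, hbf⟩ := hf
  exact ⟨⟨_, lipschitzWith_const_smul c hKf⟩, hbf.subset (tsupport_const_smul_subset' c f)⟩

lemma lipLoc_of_lipschitzWith {K : NNReal} {f : Z → ℝ} (hf : LipschitzWith K f) : LipLoc f :=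
  fun _ _ => ⟨K, hf.lipschitzOnWith⟩

lemma lipLoc_add {f g : Z → ℝ} (hf : LipLoc f) (hg : LipLoc g) : LipLoc (f + g) := by
  intro s hs
  obtain ⟨Kf, hKf⟩ := hf s hs
  obtain ⟨Kg, hKg⟩ := hg s hs
  exact ⟨Kf + Kg, hKf.add hKg⟩

lemma lipLoc_sub {f g : Z → ℝ} (hf : LipLoc f) (hg : LipLoc g) : LipLoc (f - g) := by
  intro s hs
  obtain ⟨Kf, hKf⟩ := hf s hs
  obtain ⟨Kg, hKg⟩ := hg s hs
  exact ⟨Kf + Kg, hKf.sub hKg⟩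

lemma lipLoc_smul {f : Z → ℝ} (c : ℝ) (hf : LipLoc f) : LipLoc (c • f) := by
  intro s hs
  obtain ⟨Kf, hKf⟩ := hf s hs
  refine ⟨Real.nnabs c * Kf, ?_⟩
  rw [lipschitzOnWith_iff_dist_le_mul] at hKf ⊢
  intro x hx y hy
  simp only [Pi.smul_apply, smul_eq_mul, Real.dist_eq, ← mul_sub, abs_mul]
  calc |c| * |f x - f y| ≤ |c| * (Kf * dist x y) :=
        mul_le_mul_of_nonneg_left (by simpa [Real.dist_eq] using hKf x hx y hy) (abs_nonneg c)
    _ = (Real.nnabs c * Kf : NNReal) * dist x y := by push_cast [Real.coe_nnabs]; ring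

lemma lipOnWith_min {K1 K2 : NNReal} {f g : Z → ℝ} {s : Set Z}
    (hf : LipschitzOnWith K1 f s) (hg : LipschitzOnWith K2 g s) :
    LipschitzOnWith (max K1 K2) (fun z => min (f z) (g z)) s := by
  rw [lipschitzOnWith_iff_dist_le_mul] at hf hg ⊢
  intro x hx y hy
  simp only [Real.dist_eq] at *
  refine (abs_min_sub_min_le_max _ _ _ _).trans ?_
  have c1 : (K1 : ℝ) ≤ ((K1 ⊔ K2 : NNReal) : ℝ) := by exact_mod_cast le_max_left K1 K2
  have c2 : (K2 : ℝ) ≤ ((K1 ⊔ K2 : NNReal) : ℝ) := by exact_mod_cast le_max_right K1 K2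
  rw [max_le_iff]
  exact ⟨(hf x hx y hy).trans (mul_le_mul_of_nonneg_right c1 dist_nonneg),
    (hg x hx y hy).trans (mul_le_mul_of_nonneg_right c2 dist_nonneg)⟩

lemma lipOnWith_max {K1 K2 : NNReal} {f g : Z → ℝ} {s : Set Z}
    (hf : LipschitzOnWith K1 f s) (hg : LipschitzOnWith K2 g s) :
    LipschitzOnWith (max K1 K2) (fun z => max (f z) (g z)) s := by
  rw [lipschitzOnWith_iff_dist_le_mul] at hf hg ⊢
  intro x hx y hy
  simp only [Real.dist_eq] at *
  refine (abs_max_sub_max_le_max _ _ _ _).trans ?_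
  have c1 : (K1 : ℝ) ≤ ((K1 ⊔ K2 : NNReal) : ℝ) := by exact_mod_cast le_max_left K1 K2
  have c2 : (K2 : ℝ) ≤ ((K1 ⊔ K2 : NNReal) : ℝ) := by exact_mod_cast le_max_right K1 K2
  rw [max_le_iff]
  exact ⟨(hf x hx y hy).trans (mul_le_mul_of_nonneg_right c1 dist_nonneg),
    (hg x hx y hy).trans (mul_le_mul_of_nonneg_right c2 dist_nonneg)⟩

/-- The 1-Lipschitz clamp function. -/
lemma lipschitzWith_clamp (c δ : ℝ) : LipschitzWith 1 (fun t : ℝ => min (max (t - c) 0) δ) := by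
  have h1 : LipschitzWith 1 (fun t : ℝ => t - c) := by
    rw [lipschitzWith_iff_dist_le_mul]
    intro x y
    simp [Real.dist_eq, sub_sub_sub_cancel_right]
  exact ((h1.max_const 0).min_const δ)

lemma sum_clamp {δ : ℝ} (hδ : 0 ≤ δ) (t : ℝ) (N : ℕ) :
    ∑ j ∈ Finset.range N, min (max (t - j * δ) 0) δ = min (max t 0) (N * δ) := by
  induction N with
  | zero => simp
  | succ N ih =>
    rw [Finset.sum_range_succ, ih]
    push_cast
    have hNδ : 0 ≤ (N : ℝ) * δ := by positivity
    rcases le_total t ((N : ℝ) * δ) with h | h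
    · have e1 : max (t - (N : ℝ) * δ) 0 = 0 := max_eq_right (by linarith)
      have e2 : min (0 : ℝ) δ = 0 := min_eq_left hδ
      have e3 : max t 0 ≤ (N : ℝ) * δ := max_le h hNδ
      have e4 : max t 0 ≤ ((N : ℝ) + 1) * δ := by nlinarith
      rw [e1, e2, add_zero, min_eq_left e3, min_eq_left e4]
    · have e1 : max t 0 = t := max_eq_left (le_trans hNδ h)
      have e2 : max (t - (N : ℝ) * δ) 0 = t - (N : ℝ) * δ := max_eq_left (by linarith)
      rw [e1, e2, min_eq_right h]
      rcases le_total (t - (N : ℝ) * δ) δ with h2 | h2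
      · rw [min_eq_left h2, min_eq_left (by nlinarith)]; ring
      · rw [min_eq_right h2, min_eq_right (by nlinarith)]; ring

end Helpers

section TLemmas

variable {Z : Type*} [MetricSpace Z] {m : ℕ}
variable {T : (Z → ℝ) → (Fin m → Z → ℝ) → ℝ}

lemma T_smul (hM : IsMultilinearFunctional T) {f : Z → ℝ} {π : Fin m → Z → ℝ}
    (c : ℝ) (hf : LipBS f) (hπ : ∀ i, LipLoc (π i)) : T (c • f) π = c * T f π :=
  hM.2.1 c f π hf hπ

lemma T_zero (hM : IsMultilinearFunctional T) {π : Fin m → Z → ℝ}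
    (hπ : ∀ i, LipLoc (π i)) : T 0 π = 0 := by
  have h := hM.2.1 0 0 π lipBS_zero hπ
  simpa using h

lemma lipBS_sum {g : ℕ → Z → ℝ} (hg : ∀ j, LipBS (g j)) (N : ℕ) :
    LipBS (∑ j ∈ Finset.range N, g j) := by
  induction N with
  | zero => simpa using lipBS_zero
  | succ N ih => rw [Finset.sum_range_succ]; exact lipBS_add ih (hg N)

lemma T_sum (hM : IsMultilinearFunctional T) {π : Fin m → Z → ℝ} (hπ : ∀ i, LipLoc (π i))
    {g : ℕ → Z → ℝ} (hg : ∀ j, LipBS (g j)) (N : ℕ) :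
    T (∑ j ∈ Finset.range N, g j) π = ∑ j ∈ Finset.range N, T (g j) π := by
  induction N with
  | zero => simpa using T_zero hM hπ
  | succ N ih =>
    rw [Finset.sum_range_succ, Finset.sum_range_succ,
      hM.1 _ _ π (lipBS_sum hg N) (hg N) hπ, ih]

lemma T_locality_eq (hT : IsMetricFunctional T) {f : Z → ℝ} (hf : LipBS f)
    {π π' : Fin m → Z → ℝ} (hπ : ∀ i, LipLoc (π i)) (hπ' : ∀ i, LipLoc (π' i))
    {δ : ℝ} (hδ : 0 < δ)
    (hag : ∀ (i : Fin m) z, infDist z (tsupport f) ≤ δ → π i z = π' i z) :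
    T f π = T f π' := by
  classical
  set mx : ℕ → Fin m → Z → ℝ := fun k i => if (i : ℕ) < k then π' i else π i with hmx
  have hmxloc : ∀ k i, LipLoc (mx k i) := by
    intro k i
    by_cases h : (i : ℕ) < k
    · simpa [hmx, h] using hπ' i
    · simpa [hmx, h] using hπ i
  have key : ∀ k, k ≤ m → T f π = T f (mx k) := by
    intro k
    induction k with
    | zero =>
      intro _
      have h0 : mx 0 = π := by funext i; simp [hmx]
      rw [h0]
    | succ k ih =>
      intro hk
      have hk' : k < m := hk
      have e1 : mx (k + 1) = Function.update (mx k) ⟨k, hk'⟩ (π' ⟨k, hk'⟩) := by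
        funext i
        rcases eq_or_ne i ⟨k, hk'⟩ with rfl | hne
        · simp [hmx]
        · have hik : (i : ℕ) ≠ k := fun hh => hne (Fin.ext hh)
          rw [Function.update_of_ne hne]
          simp only [hmx]
          by_cases h2 : (i : ℕ) < k
          · rw [if_pos h2, if_pos (Nat.lt_succ_of_lt h2)]
          · rw [if_neg h2, if_neg (by omega)]
      have hdd : π' ⟨k, hk'⟩ = π ⟨k, hk'⟩ + (π' ⟨k, hk'⟩ - π ⟨k, hk'⟩) := by
        funext z; simp
      have hadd := hT.1.2.2.1 f (mx k) ⟨k, hk'⟩ (π ⟨k, hk'⟩) (π' ⟨k, hk'⟩ - π ⟨k, hk'⟩)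
        hf (hmxloc k) (hπ _) (lipLoc_sub (hπ' _) (hπ _))
      have e2 : Function.update (mx k) ⟨k, hk'⟩ (π ⟨k, hk'⟩) = mx k := by
        have h3 : mx k ⟨k, hk'⟩ = π ⟨k, hk'⟩ := by simp [hmx]
        rw [← h3, Function.update_eq_self]
      have hzero : T f (Function.update (mx k) ⟨k, hk'⟩ (π' ⟨k, hk'⟩ - π ⟨k, hk'⟩)) = 0 := by
        apply hT.2.2 f _ hf
        · intro j
          rcases eq_or_ne j ⟨k, hk'⟩ with rfl | hne
          · rw [Function.update_self]; exact lipLoc_sub (hπ' _) (hπ _)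
          · rw [Function.update_of_ne hne]; exact hmxloc k j
        · refine ⟨⟨k, hk'⟩, δ, hδ, fun z w hz hw => ?_⟩
          simp only [Function.update_self, Pi.sub_apply]
          rw [← hag _ z hz, ← hag _ w hw, sub_self, sub_self]
      rw [ih (le_of_lt hk'), e1, hdd, hadd, e2, hzero, add_zero]
  have hmxm : mx m = π' := funext fun i => if_pos i.isLt
  rw [key m le_rfl, hmxm]

lemma T_scale (hM : IsMultilinearFunctional T) {f : Z → ℝ} (hf : LipBS f)
    {τ : Fin m → Z → ℝ} (hτ : ∀ i, LipLoc (τ i)) (c : Fin m → ℝ) :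
    T f (fun i => c i • τ i) = (∏ i, c i) * T f τ := by
  classical
  set σ : Fin m → Z → ℝ := fun i => c i • τ i with hσ
  have hσloc : ∀ i, LipLoc (σ i) := fun i => lipLoc_smul (c i) (hτ i)
  set mx : ℕ → Fin m → Z → ℝ := fun k i => if (i : ℕ) < k then τ i else σ i with hmx
  have hmxloc : ∀ k i, LipLoc (mx k i) := by
    intro k i
    by_cases h : (i : ℕ) < k
    · simpa [hmx, h] using hτ i
    · simpa [hmx, h] using hσloc i
  have key : ∀ k, k ≤ m → T f σ =
      (∏ i ∈ Finset.univ.filter (fun i : Fin m => (i : ℕ) < k), c i) * T f (mx k) := by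
    intro k
    induction k with
    | zero =>
      intro _
      have h1 : Finset.univ.filter (fun i : Fin m => (i : ℕ) < 0) = ∅ := by
        ext i; simp
      have h2 : mx 0 = σ := by funext i; simp [hmx]
      rw [h1, h2, Finset.prod_empty, one_mul]
    | succ k ih =>
      intro hk
      have hk' : k < m := hk
      have e2 : Function.update (mx k) ⟨k, hk'⟩ (σ ⟨k, hk'⟩) = mx k := by
        have h3 : mx k ⟨k, hk'⟩ = σ ⟨k, hk'⟩ := by simp [hmx]
        rw [← h3, Function.update_eq_self]
      have e1 : Function.update (mx k) ⟨k, hk'⟩ (τ ⟨k, hk'⟩) = mx (k + 1) := by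
        funext i
        rcases eq_or_ne i ⟨k, hk'⟩ with rfl | hne
        · simp [hmx]
        · have hik : (i : ℕ) ≠ k := fun hh => hne (Fin.ext hh)
          rw [Function.update_of_ne hne]
          simp only [hmx]
          by_cases h2 : (i : ℕ) < k
          · rw [if_pos h2, if_pos (Nat.lt_succ_of_lt h2)]
          · rw [if_neg h2, if_neg (by omega)]
      have hsm := hM.2.2.2 f (mx k) ⟨k, hk'⟩ (c ⟨k, hk'⟩) (τ ⟨k, hk'⟩) hf (hmxloc k) (hτ _)
      have hTk : T f (mx k) = c ⟨k, hk'⟩ * T f (mx (k + 1)) := by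
        have hσk : σ ⟨k, hk'⟩ = c ⟨k, hk'⟩ • τ ⟨k, hk'⟩ := rfl
        rw [← e2, hσk, hsm, e1]
      have hfil : Finset.univ.filter (fun i : Fin m => (i : ℕ) < k + 1) =
          insert ⟨k, hk'⟩ (Finset.univ.filter (fun i : Fin m => (i : ℕ) < k)) := by
        ext i
        simp only [Finset.mem_filter, Finset.mem_univ, true_and, Finset.mem_insert, Fin.ext_iff]
        omega
      have hnm : (⟨k, hk'⟩ : Fin m) ∉ Finset.univ.filter (fun i : Fin m => (i : ℕ) < k) := by
        simp
      rw [ih (le_of_lt hk'), hfil, Finset.prod_insert hnm, hTk]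
      ring
  have hfin : Finset.univ.filter (fun i : Fin m => (i : ℕ) < m) = Finset.univ := by
    apply Finset.filter_true_of_mem
    intro i _
    exact i.isLt
  have hmxm : mx m = τ := funext fun i => if_pos i.isLt
  have := key m le_rfl
  rw [hfin, hmxm] at this
  exact this

lemma massIn_mono (T : (Z → ℝ) → (Fin m → Z → ℝ) → ℝ) {V V' : Set Z} (h : V ⊆ V') :
    massIn T V ≤ massIn T V' := by
  apply iSup_le
  rintro ⟨q, hq1, hq2⟩
  exact le_iSup_of_le ⟨q, fun i => ⟨(hq1 i).1, ((hq1 i).2.1).trans h, (hq1 i).2.2⟩, hq2⟩ le_rfl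

lemma massIn_le_normT (T : (Z → ℝ) → (Fin m → Z → ℝ) → ℝ) {V : Set Z} :
    massIn T V ≤ normT T V :=
  le_iInf fun _ => le_iInf fun hV' => massIn_mono T hV'.2

lemma normT_le_massIn (T : (Z → ℝ) → (Fin m → Z → ℝ) → ℝ) {V : Set Z} (hV : IsOpen V) :
    normT T V ≤ massIn T V :=
  iInf_le_of_le V (iInf_le _ ⟨hV, subset_rfl⟩)

lemma piece_bound (hM : IsMultilinearFunctional T) {g : Z → ℝ} {τ : Fin m → Z → ℝ}
    {V : Set Z} {δ : ℝ} (hδ : 0 < δ) (hg : LipBS g) (hτ : ∀ k, LipschitzWith 1 (τ k))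
    (hsup : tsupport g ⊆ V) (hb : ∀ z, |g z| ≤ δ) :
    ENNReal.ofReal |T g τ| ≤ ENNReal.ofReal δ * massIn T V := by
  have hτloc : ∀ k, LipLoc (τ k) := fun k => lipLoc_of_lipschitzWith (hτ k)
  have key : ∀ c : ℝ, |c| ≤ δ⁻¹ → ENNReal.ofReal (c * T g τ) ≤ massIn T V := by
    intro c hc
    have hcond1 : ∀ i : Fin 1, LipBS ((fun _ : Fin 1 => (c • g, τ)) i).1 ∧
        tsupport ((fun _ : Fin 1 => (c • g, τ)) i).1 ⊆ V ∧
        ∀ k, LipschitzWith 1 (((fun _ : Fin 1 => (c • g, τ)) i).2 k) :=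
      fun _ => ⟨lipBS_smul c hg, (tsupport_const_smul_subset' c g).trans hsup, hτ⟩
    have hcond2 : ∀ z, (∑ i : Fin 1, |((fun _ : Fin 1 => (c • g, τ)) i).1 z|) ≤ 1 := by
      intro z
      rw [Fin.sum_univ_one]
      simp only [Pi.smul_apply, smul_eq_mul, abs_mul]
      calc |c| * |g z| ≤ δ⁻¹ * δ := mul_le_mul hc (hb z) (abs_nonneg _) (by positivity)
        _ = 1 := inv_mul_cancel₀ (ne_of_gt hδ)
    have hval : ENNReal.ofReal (∑ i : Fin 1,
        T (((fun _ : Fin 1 => (c • g, τ)) i).1) (((fun _ : Fin 1 => (c • g, τ)) i).2))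
        = ENNReal.ofReal (c * T g τ) := by
      rw [Fin.sum_univ_one]
      dsimp only
      rw [T_smul hM c hg hτloc]
    rw [← hval]
    exact le_iSup_of_le ⟨⟨1, fun _ => (c • g, τ)⟩, hcond1, hcond2⟩ le_rfl
  have habs : ENNReal.ofReal (δ⁻¹ * |T g τ|) ≤ massIn T V := by
    rcases abs_cases (T g τ) with ⟨he, _⟩ | ⟨he, _⟩
    · rw [he]
      exact key δ⁻¹ (le_of_eq (abs_of_nonneg (by positivity)))
    · rw [he]
      have h2 : δ⁻¹ * -T g τ = (-δ⁻¹) * T g τ := by ring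
      rw [h2]
      exact key (-δ⁻¹) (le_of_eq (by rw [abs_neg, abs_of_nonneg (by positivity)]))
  have hsplit : |T g τ| = δ * (δ⁻¹ * |T g τ|) := by
    field_simp
  rw [hsplit, ENNReal.ofReal_mul hδ.le]
  exact mul_le_mul_right habs _

end TLemmas


section Core

variable {Z : Type*} [MetricSpace Z] [MeasurableSpace Z] [BorelSpace Z] {m : ℕ}
variable {T : (Z → ℝ) → (Fin m → Z → ℝ) → ℝ}

lemma tsupport_clamp_subset (f : Z → ℝ) {c δ : ℝ} (hc : 0 ≤ c) (hδ : 0 < δ) :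
    tsupport (fun z => min (max (f z - c) 0) δ) ⊆ tsupport f := by
  apply closure_mono
  intro z hz
  simp only [Function.mem_support] at hz ⊢
  intro h0
  apply hz
  rw [h0, zero_sub, max_eq_right (by linarith), min_eq_left hδ.le]

lemma clamp_lipBS {f : Z → ℝ} (hf : LipBS f) {c δ : ℝ} (hc : 0 ≤ c) (hδ : 0 < δ) :
    LipBS (fun z => min (max (f z - c) 0) δ) := by
  obtain ⟨⟨Kf, hKf⟩, hb⟩ := hf
  constructor
  · refine ⟨1 * Kf, ?_⟩
    have := (lipschitzWith_clamp c δ).comp hKf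
    simpa [Function.comp_def] using this
  · exact hb.subset (tsupport_clamp_subset f hc hδ)

lemma clamp_nonneg (f : Z → ℝ) (c δ : ℝ) (hδ : 0 < δ) (z : Z) :
    0 ≤ min (max (f z - c) 0) δ :=
  le_min (le_max_right _ 0) hδ.le

lemma clamp_abs_le (f : Z → ℝ) (c δ : ℝ) (hδ : 0 < δ) (z : Z) :
    |min (max (f z - c) 0) δ| ≤ δ := by
  rw [abs_of_nonneg (clamp_nonneg f c δ hδ z)]
  exact min_le_right _ _

/-- Bound for one "half" (positive part pieces) of the decomposition. -/
lemma half_bound (hM : IsMultilinearFunctional T)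
    (μ : Measure Z) (hmass : ∀ V : Set Z, IsOpen V → massIn T V ≤ μ V)
    {U : Set Z} (hUopen : IsOpen U)
    {τ : Fin m → Z → ℝ} (hτ : ∀ k, LipschitzWith 1 (τ k))
    (f₀ : Z → ℝ) (hf₀ : LipBS f₀) (hcont : Continuous f₀) (hsupp : tsupport f₀ ⊆ U)
    {δ : ℝ} (hδ : 0 < δ) (N : ℕ) :
    ∑ j ∈ Finset.range N, ENNReal.ofReal |T (fun z => min (max (f₀ z - j * δ) 0) δ) τ| ≤
      ENNReal.ofReal δ * μ U + ENNReal.ofReal δ * μ U +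
        ∫⁻ z, ENNReal.ofReal (max (f₀ z) 0) ∂μ := by
  set g : ℕ → Z → ℝ := fun j z => min (max (f₀ z - j * δ) 0) δ with hgdef
  have hjδ : ∀ j : ℕ, (0 : ℝ) ≤ j * δ := fun j => by positivity
  have hgBS : ∀ j, LipBS (g j) := fun j => clamp_lipBS hf₀ (hjδ j) hδ
  set V : ℕ → Set Z := fun j => {z | ((j : ℝ) - 1) * δ < f₀ z} ∩ U with hVdef
  have hVopen : ∀ j, IsOpen (V j) := fun j => (isOpen_lt continuous_const hcont).inter hUopen
  have hVsub : ∀ j, tsupport (g j) ⊆ V j := by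
    intro j
    have hcl : tsupport (g j) ⊆ {z | (j : ℝ) * δ ≤ f₀ z} := by
      apply closure_minimal ?_ (isClosed_le continuous_const hcont)
      intro w hw
      simp only [Function.mem_support] at hw
      by_contra hlt
      simp only [Set.mem_setOf_eq, not_le] at hlt
      apply hw
      simp only [hgdef]
      rw [max_eq_right (by linarith), min_eq_left hδ.le]
    refine Set.subset_inter ?_ (((tsupport_clamp_subset f₀ (hjδ j) hδ)).trans hsupp)
    intro z hz
    have := hcl hz
    simp only [Set.mem_setOf_eq] at this ⊢
    nlinarith
  have hpiece : ∀ j, ENNReal.ofReal |T (g j) τ| ≤ ENNReal.ofReal δ * μ (V j) := by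
    intro j
    refine (piece_bound hM hδ (hgBS j) hτ (hVsub j) (clamp_abs_le f₀ _ δ hδ)).trans ?_
    exact mul_le_mul_right (hmass _ (hVopen j)) _
  have hVU : ∀ j, μ (V j) ≤ μ U := fun j => measure_mono Set.inter_subset_right
  have hgmeas : ∀ j, Measurable fun z => ENNReal.ofReal (g j z) := by
    intro j
    apply ENNReal.measurable_ofReal.comp
    exact ((((hcont.sub continuous_const).max continuous_const).min continuous_const)).measurable
  have hindicator : ∀ j, ENNReal.ofReal δ * μ (V (j + 2)) ≤ ∫⁻ z, ENNReal.ofReal (g j z) ∂μ := by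
    intro j
    have hmeas : MeasurableSet (V (j + 2)) := (hVopen (j + 2)).measurableSet
    rw [← MeasureTheory.lintegral_indicator_const hmeas]
    apply lintegral_mono
    intro z
    by_cases hz : z ∈ V (j + 2)
    · rw [Set.indicator_of_mem hz]
      have hz1 : ((j : ℝ) + 1) * δ < f₀ z := by
        have h5 := hz.1
        simp only [Set.mem_setOf_eq] at h5
        push_cast at h5
        nlinarith
      have hb1 : (0 : ℝ) ≤ f₀ z - (j : ℝ) * δ := by nlinarith
      have hb2 : δ ≤ f₀ z - (j : ℝ) * δ := by nlinarith
      have hgz : g j z = δ := by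
        simp only [hgdef]
        rw [max_eq_left hb1, min_eq_right hb2]
      show ENNReal.ofReal δ ≤ ENNReal.ofReal (g j z)
      rw [hgz]
    · rw [Set.indicator_of_notMem hz]
      exact zero_le
  have e12 : ∀ a : ℕ → ℝ≥0∞,
      ∑ j ∈ Finset.range (N + 2), a j = ∑ j ∈ Finset.range N, a (j + 2) + a 1 + a 0 := by
    intro a
    rw [Finset.sum_range_succ', Finset.sum_range_succ']
  have hsum2 : ∑ j ∈ Finset.range N, ENNReal.ofReal δ * μ (V (j + 2)) ≤
      ∫⁻ z, ENNReal.ofReal (max (f₀ z) 0) ∂μ := by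
    calc ∑ j ∈ Finset.range N, ENNReal.ofReal δ * μ (V (j + 2))
        ≤ ∑ j ∈ Finset.range N, ∫⁻ z, ENNReal.ofReal (g j z) ∂μ :=
          Finset.sum_le_sum fun j _ => hindicator j
      _ = ∫⁻ z, ∑ j ∈ Finset.range N, ENNReal.ofReal (g j z) ∂μ :=
          (MeasureTheory.lintegral_finset_sum _ fun j _ => hgmeas j).symm
      _ = ∫⁻ z, ENNReal.ofReal (∑ j ∈ Finset.range N, g j z) ∂μ := by
          apply lintegral_congr
          intro z
          rw [ENNReal.ofReal_sum_of_nonneg fun j _ => clamp_nonneg f₀ _ δ hδ z]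
      _ ≤ ∫⁻ z, ENNReal.ofReal (max (f₀ z) 0) ∂μ := by
          apply lintegral_mono
          intro z
          apply ENNReal.ofReal_le_ofReal
          rw [sum_clamp hδ.le (f₀ z) N]
          exact min_le_left _ _
  calc ∑ j ∈ Finset.range N, ENNReal.ofReal |T (g j) τ|
      ≤ ∑ j ∈ Finset.range N, ENNReal.ofReal δ * μ (V j) :=
        Finset.sum_le_sum fun j _ => hpiece j
    _ ≤ ∑ j ∈ Finset.range (N + 2), ENNReal.ofReal δ * μ (V j) :=
        Finset.sum_le_sum_of_subset (Finset.range_subset_range.mpr (by omega))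
    _ = ∑ j ∈ Finset.range N, ENNReal.ofReal δ * μ (V (j + 2)) +
        ENNReal.ofReal δ * μ (V 1) + ENNReal.ofReal δ * μ (V 0) :=
        e12 _
    _ ≤ ∫⁻ z, ENNReal.ofReal (max (f₀ z) 0) ∂μ +
        ENNReal.ofReal δ * μ U + ENNReal.ofReal δ * μ U := by
        refine add_le_add (add_le_add hsum2 (mul_le_mul_right (hVU 1) _))
          (mul_le_mul_right (hVU 0) _)
    _ = ENNReal.ofReal δ * μ U + ENNReal.ofReal δ * μ U +
        ∫⁻ z, ENNReal.ofReal (max (f₀ z) 0) ∂μ := by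
        ring

/-- Core estimate: the unit-Lipschitz case. -/
lemma core_bound (hT : IsMetricFunctional T) (hTloc : MlocCond T)
    (μ : Measure Z) (hμ : ∀ s : Set Z, MeasurableSet s → μ s = normT T s)
    (f : Z → ℝ) (τ : Fin m → Z → ℝ)
    (hf : LipBS f) (hτ : ∀ k, LipschitzWith 1 (τ k)) :
    ENNReal.ofReal |T f τ| ≤ ∫⁻ z, ENNReal.ofReal |f z| ∂μ := by
  have hτloc : ∀ k, LipLoc (τ k) := fun k => lipLoc_of_lipschitzWith (hτ k)
  obtain ⟨⟨Kf, hKf⟩, hSb⟩ := id hf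
  have hcont : Continuous f := hKf.continuous
  by_cases hSe : tsupport f = ∅
  · have hf0 : f = (0 : Z → ℝ) := by
      funext z
      by_contra h0
      exact (Set.eq_empty_iff_forall_notMem.mp hSe z)
        (subset_closure (Function.mem_support.mpr h0))
    rw [hf0, T_zero hT.1 hτloc]
    simp
  obtain ⟨s₀, hs₀⟩ := Set.nonempty_iff_ne_empty.mpr hSe
  set U := Metric.thickening 1 (tsupport f) with hU
  have hUopen : IsOpen U := Metric.isOpen_thickening
  have hUb : IsBounded U := hSb.thickening
  have hSU : tsupport f ⊆ U := Metric.self_subset_thickening one_pos _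
  obtain ⟨C0, _, _, hMU, _⟩ := hTloc U hUopen hUb 1 one_pos
  have hmass : ∀ V : Set Z, IsOpen V → massIn T V ≤ μ V := by
    intro V hV
    rw [hμ V hV.measurableSet]
    exact massIn_le_normT T
  have hμU_lt : μ U < ⊤ := by
    have : μ U ≤ massIn T U := by
      rw [hμ U hUopen.measurableSet]
      exact normT_le_massIn T hUopen
    exact lt_of_le_of_lt this hMU
  -- uniform bound on |f|
  set F : ℝ := |f s₀| + Kf * Metric.diam (tsupport f) with hF
  have hFb : ∀ z, |f z| ≤ F := by
    intro z
    by_cases hz : z ∈ tsupport f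
    · have h1 : |f z - f s₀| ≤ Kf * dist z s₀ := by
        simpa [Real.dist_eq] using hKf.dist_le_mul z s₀
      have h2 : dist z s₀ ≤ Metric.diam (tsupport f) := Metric.dist_le_diam_of_mem hSb hz hs₀
      have h3 : (Kf : ℝ) * dist z s₀ ≤ Kf * Metric.diam (tsupport f) :=
        mul_le_mul_of_nonneg_left h2 Kf.2
      calc |f z| = |(f z - f s₀) + f s₀| := by rw [sub_add_cancel]
        _ ≤ |f z - f s₀| + |f s₀| := abs_add_le _ _
        _ ≤ F := by rw [hF]; linarith
    · have h0 : f z = 0 := image_eq_zero_of_notMem_tsupport hz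
      rw [h0, abs_zero, hF]
      positivity
  -- negated function
  have hnegBS : LipBS (fun z => -f z) := by
    constructor
    · exact ⟨Kf, hKf.neg⟩
    · refine hSb.subset ?_
      apply closure_mono
      intro z hz
      simp only [Function.mem_support] at hz ⊢
      intro h0; exact hz (by rw [h0, neg_zero])
  have hnegsupp : tsupport (fun z => -f z) ⊆ U := by
    refine Set.Subset.trans ?_ hSU
    apply closure_mono
    intro z hz
    simp only [Function.mem_support] at hz ⊢
    intro h0; exact hz (by rw [h0, neg_zero])
  -- main per-δ estimate
  have main : ∀ δ : ℝ, 0 < δ → ENNReal.ofReal |T f τ| ≤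
      ENNReal.ofReal δ * (4 * μ U) + ∫⁻ z, ENNReal.ofReal |f z| ∂μ := by
    intro δ hδ
    set N := Nat.ceil (F / δ) with hN
    have hNδ : F ≤ (N : ℝ) * δ := by
      rw [← div_le_iff₀ hδ]
      exact Nat.le_ceil _
    set g : ℕ → Z → ℝ := fun j z => min (max (f z - j * δ) 0) δ with hgdef
    set h : ℕ → Z → ℝ := fun j z => min (max (-f z - j * δ) 0) δ with hhdef
    have hjδ : ∀ j : ℕ, (0 : ℝ) ≤ j * δ := fun j => by positivity
    have hgBS : ∀ j, LipBS (g j) := fun j => clamp_lipBS hf (hjδ j) hδ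
    have hhBS : ∀ j, LipBS (h j) := fun j => clamp_lipBS hnegBS (hjδ j) hδ
    have hsplit : f = (∑ j ∈ Finset.range N, g j) + (-1 : ℝ) • (∑ j ∈ Finset.range N, h j) := by
      funext z
      simp only [Pi.add_apply, Pi.smul_apply, Finset.sum_apply, smul_eq_mul, neg_one_mul, hgdef,
        hhdef]
      rw [sum_clamp hδ.le, sum_clamp hδ.le]
      have h1 := abs_le.mp ((hFb z).trans hNδ)
      have hNδ0 : (0 : ℝ) ≤ (N : ℝ) * δ := by positivity
      rcases le_total (f z) 0 with hfz | hfz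
      · rw [max_eq_right hfz, min_eq_left hNδ0, max_eq_left (by linarith),
          min_eq_left (by linarith)]
        ring
      · rw [max_eq_left hfz, min_eq_left (by linarith), max_eq_right (by linarith),
          min_eq_left hNδ0]
        ring
    have hTdec : T f τ = (∑ j ∈ Finset.range N, T (g j) τ) -
        ∑ j ∈ Finset.range N, T (h j) τ := by
      conv_lhs => rw [hsplit]
      rw [hT.1.1 _ _ τ (lipBS_sum hgBS N) (lipBS_smul (-1) (lipBS_sum hhBS N)) hτloc,
        T_smul hT.1 (-1) (lipBS_sum hhBS N) hτloc,
        T_sum hT.1 hτloc hgBS N, T_sum hT.1 hτloc hhBS N]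
      ring
    have htri : |T f τ| ≤ (∑ j ∈ Finset.range N, |T (g j) τ|) +
        ∑ j ∈ Finset.range N, |T (h j) τ| := by
      rw [hTdec, sub_eq_add_neg]
      refine (abs_add_le _ _).trans ?_
      rw [abs_neg]
      exact add_le_add (Finset.abs_sum_le_sum_abs _ _) (Finset.abs_sum_le_sum_abs _ _)
    have hext : ENNReal.ofReal |T f τ| ≤
        (∑ j ∈ Finset.range N, ENNReal.ofReal |T (g j) τ|) +
        ∑ j ∈ Finset.range N, ENNReal.ofReal |T (h j) τ| := by
      refine (ENNReal.ofReal_le_ofReal htri).trans ?_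
      refine (ENNReal.ofReal_add_le).trans ?_
      rw [ENNReal.ofReal_sum_of_nonneg fun j _ => abs_nonneg _,
        ENNReal.ofReal_sum_of_nonneg fun j _ => abs_nonneg _]
    have hg_half := half_bound hT.1 μ hmass hUopen hτ f hf hcont hSU hδ N
    have hh_half := half_bound hT.1 μ hmass hUopen hτ (fun z => -f z) hnegBS hcont.neg
      hnegsupp hδ N
    have hintsum : (∫⁻ z, ENNReal.ofReal (max (f z) 0) ∂μ) +
        ∫⁻ z, ENNReal.ofReal (max (-f z) 0) ∂μ = ∫⁻ z, ENNReal.ofReal |f z| ∂μ := by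
      rw [← MeasureTheory.lintegral_add_left]
      · apply lintegral_congr
        intro z
        rw [← ENNReal.ofReal_add (le_max_right _ _) (le_max_right _ _)]
        congr 1
        rcases le_total (f z) 0 with hfz | hfz
        · rw [max_eq_right hfz, max_eq_left (by linarith), abs_of_nonpos hfz]; ring
        · rw [max_eq_left hfz, max_eq_right (by linarith), abs_of_nonneg hfz]; ring
      · exact ENNReal.measurable_ofReal.comp (hcont.max continuous_const).measurable
    calc ENNReal.ofReal |T f τ| ≤ _ := hext
      _ ≤ (ENNReal.ofReal δ * μ U + ENNReal.ofReal δ * μ U +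
            ∫⁻ z, ENNReal.ofReal (max (f z) 0) ∂μ) +
          (ENNReal.ofReal δ * μ U + ENNReal.ofReal δ * μ U +
            ∫⁻ z, ENNReal.ofReal (max (-f z) 0) ∂μ) := add_le_add hg_half hh_half
      _ = ENNReal.ofReal δ * (4 * μ U) +
          ((∫⁻ z, ENNReal.ofReal (max (f z) 0) ∂μ) +
            ∫⁻ z, ENNReal.ofReal (max (-f z) 0) ∂μ) := by ring
      _ = ENNReal.ofReal δ * (4 * μ U) + ∫⁻ z, ENNReal.ofReal |f z| ∂μ := by
          rw [hintsum]
  -- pass to the limit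
  rcases eq_or_ne (∫⁻ z, ENNReal.ofReal |f z| ∂μ) ⊤ with htop | htop
  · rw [htop]; exact le_top
  apply ENNReal.le_of_forall_pos_le_add
  intro ε hε _
  have h4top : 4 * μ U ≠ ⊤ := ENNReal.mul_ne_top (by norm_num) hμU_lt.ne
  set c : ℝ := (4 * μ U).toReal with hc
  have hc0 : 0 ≤ c := ENNReal.toReal_nonneg
  have hεR : (0 : ℝ) < ε := hε
  set δ : ℝ := (ε : ℝ) / (c + 1) with hδdef
  have hδpos : 0 < δ := by positivity
  refine (main δ hδpos).trans ?_
  rw [add_comm]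
  refine add_le_add le_rfl ?_
  calc ENNReal.ofReal δ * (4 * μ U) = ENNReal.ofReal δ * ENNReal.ofReal c := by
        rw [ENNReal.ofReal_toReal h4top]
    _ = ENNReal.ofReal (δ * c) := (ENNReal.ofReal_mul hδpos.le).symm
    _ ≤ ENNReal.ofReal (ε : ℝ) := by
        apply ENNReal.ofReal_le_ofReal
        rw [hδdef, div_mul_eq_mul_div, div_le_iff₀ (by positivity)]
        nlinarith
    _ = (ε : ℝ≥0∞) := ENNReal.ofReal_coe_nnreal

end Core



lemma lipOnWith_neg {Z : Type*} [MetricSpace Z] {K : NNReal} {f : Z → ℝ} {s : Set Z}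
    (h : LipschitzOnWith K f s) : LipschitzOnWith K (fun z => -(f z)) s := by
  rw [lipschitzOnWith_iff_dist_le_mul] at h ⊢
  intro x hx y hy
  simpa [Real.dist_eq, neg_sub_neg, abs_sub_comm] using h x hx y hy

lemma lipOnWith_weaken {Z : Type*} [MetricSpace Z] {K K' : NNReal} {f : Z → ℝ} {s : Set Z}
    (h : LipschitzOnWith K f s) (hKK : K ≤ K') : LipschitzOnWith K' f s :=
  fun x hx y hy => le_trans (h hx hy) (mul_le_mul_left (by exact_mod_cast hKK) _)

/-- Proposition 2.5, first part: the integral mass inequality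
`|T(f,π)| ≤ ∏ Lip(π_i|spt f) ∫ |f| d‖T‖` for currents with locally finite mass. -/
theorem integral_mass_bound {Z : Type*} [MetricSpace Z] [MeasurableSpace Z] [BorelSpace Z]
    {m : ℕ} (T : (Z → ℝ) → (Fin m → Z → ℝ) → ℝ)
    (hT : IsMetricFunctional T) (hTloc : MlocCond T)
    (μ : Measure Z) (hμ : ∀ s : Set Z, MeasurableSet s → μ s = normT T s)
    (f : Z → ℝ) (π : Fin m → Z → ℝ) (K : Fin m → NNReal)
    (hf : LipBS f) (hπ : ∀ i, LipLoc (π i))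
    (hK : ∀ i, LipschitzOnWith (K i) (π i) (tsupport f)) :
    ENNReal.ofReal |T f π| ≤
      (∏ i, (K i : ℝ≥0∞)) * ∫⁻ z, ENNReal.ofReal |f z| ∂μ := by
  classical
  obtain ⟨⟨Kf, hKf⟩, hSb⟩ := id hf
  by_cases hSe : tsupport f = ∅
  · have hf0 : f = (0 : Z → ℝ) := by
      funext z
      by_contra h0
      exact (Set.eq_empty_iff_forall_notMem.mp hSe z)
        (subset_closure (Function.mem_support.mpr h0))
    rw [hf0, T_zero hT.1 hπ]
    simp
  obtain ⟨s₀, hs₀⟩ := Set.nonempty_iff_ne_empty.mpr hSe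
  have hSne : (tsupport f).Nonempty := ⟨s₀, hs₀⟩
  have hSclosed : IsClosed (tsupport f) := isClosed_closure
  -- the bounded set on which we control π
  set B : Set Z := {z | infDist z (tsupport f) ≤ 2} with hBdef
  have hBb : IsBounded B := by
    refine (Metric.isBounded_closedBall (x := s₀) (r := 3 + Metric.diam (tsupport f))).subset ?_
    intro z hz
    have hz2 : infDist z (tsupport f) < 3 := lt_of_le_of_lt hz (by norm_num)
    obtain ⟨s, hsS, hds⟩ := (Metric.infDist_lt_iff hSne).mp hz2
    have hdd : dist s s₀ ≤ Metric.diam (tsupport f) := Metric.dist_le_diam_of_mem hSb hsS hs₀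
    have := dist_triangle z s s₀
    simp only [Metric.mem_closedBall]
    linarith
  have hSB : tsupport f ⊆ B := by
    intro z hz
    simp only [hBdef, Set.mem_setOf_eq, infDist_zero_of_mem hz]
    norm_num
  -- Lipschitz constants of π on B and McShane extensions
  have hL : ∀ i, ∃ L : NNReal, LipschitzOnWith L (π i) B := fun i => hπ i B hBb
  set L : Fin m → NNReal := fun i => (hL i).choose with hLdef
  have hLspec : ∀ i, LipschitzOnWith (L i) (π i) B := fun i => (hL i).choose_spec
  have hext : ∀ i, ∃ σ : Z → ℝ, LipschitzWith (K i) σ ∧ Set.EqOn (π i) σ (tsupport f) :=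
    fun i => (hK i).extend_real
  set σ : Fin m → Z → ℝ := fun i => (hext i).choose with hσdef
  have hσlip : ∀ i, LipschitzWith (K i) (σ i) := fun i => (hext i).choose_spec.1
  have hσeq : ∀ i, Set.EqOn (π i) (σ i) (tsupport f) := fun i => (hext i).choose_spec.2
  have hσloc : ∀ i, LipLoc (σ i) := fun i => lipLoc_of_lipschitzWith (hσlip i)
  set C : NNReal := Finset.univ.sup (fun i => L i + K i) with hCdef
  have hCi : ∀ i, L i + K i ≤ C := fun i => Finset.le_sup (f := fun i => L i + K i) (Finset.mem_univ i)
  have hC0 : (0 : ℝ) ≤ (C : ℝ) := NNReal.coe_nonneg C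
  -- distance-form Lipschitz bounds
  have hLd : ∀ i, ∀ x ∈ B, ∀ y ∈ B, |π i x - π i y| ≤ (L i : ℝ) * dist x y := by
    intro i x hx y hy
    have := (lipschitzOnWith_iff_dist_le_mul.mp (hLspec i)) x hx y hy
    simpa [Real.dist_eq] using this
  have hKd : ∀ i, ∀ x y : Z, |σ i x - σ i y| ≤ (K i : ℝ) * dist x y := by
    intro i x y
    have := (hσlip i).dist_le_mul x y
    simpa [Real.dist_eq] using this
  -- key pointwise bound on π - σ
  have hhb : ∀ i, ∀ z ∈ B, |π i z - σ i z| ≤ (C : ℝ) * infDist z (tsupport f) := by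
    intro i z hz
    have key : ∀ ε : ℝ, 0 < ε →
        |π i z - σ i z| ≤ (C : ℝ) * infDist z (tsupport f) + (C : ℝ) * ε := by
      intro ε hε
      obtain ⟨s, hsS, hds⟩ := (Metric.infDist_lt_iff hSne).mp
        (show infDist z (tsupport f) < infDist z (tsupport f) + ε by linarith)
      have hsB : s ∈ B := hSB hsS
      have h1 := hLd i z hz s hsB
      have h2 := hKd i s z
      have h3 : π i s = σ i s := hσeq i hsS
      have hCc : ((L i : ℝ) + (K i : ℝ)) ≤ (C : ℝ) := by exact_mod_cast hCi i
      have h4 : |π i z - σ i z| ≤ ((L i : ℝ) + (K i : ℝ)) * dist z s := by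
        have he : π i z - σ i z = (π i z - π i s) + (σ i s - σ i z) := by rw [h3]; ring
        rw [he]
        refine (abs_add_le _ _).trans ?_
        have h2' : |σ i s - σ i z| ≤ (K i : ℝ) * dist z s := by
          rw [dist_comm z s]
          exact h2
        linarith
      have h5 : dist z s ≤ infDist z (tsupport f) + ε := hds.le
      have hd0 : (0 : ℝ) ≤ dist z s := dist_nonneg
      calc |π i z - σ i z| ≤ ((L i : ℝ) + (K i : ℝ)) * dist z s := h4
        _ ≤ (C : ℝ) * dist z s := mul_le_mul_of_nonneg_right hCc hd0
        _ ≤ (C : ℝ) * (infDist z (tsupport f) + ε) := mul_le_mul_of_nonneg_left h5 hC0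
        _ = (C : ℝ) * infDist z (tsupport f) + (C : ℝ) * ε := by ring
    apply _root_.le_of_forall_pos_le_add
    intro ε hε
    have hk := key (ε / ((C : ℝ) + 1)) (by positivity)
    have h6 : (C : ℝ) * (ε / ((C : ℝ) + 1)) ≤ ε := by
      rw [mul_comm, div_mul_eq_mul_div, div_le_iff₀ (by positivity)]
      nlinarith
    linarith
  -- the cutoff functions
  set gc : ℕ → Z → ℝ := fun j z => max 0 (2 / ((j : ℝ) + 1) - infDist z (tsupport f)) with hgcdef
  set g : ℕ → Z → ℝ := fun j => (C : ℝ) • gc j with hgdef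
  have hgz : ∀ j z, g j z = (C : ℝ) * max 0 (2 / ((j : ℝ) + 1) - infDist z (tsupport f)) :=
    fun j z => rfl
  have hgclip : ∀ j, LipschitzWith (0 + 1) (gc j) := by
    intro j
    exact ((LipschitzWith.const' (2 / ((j : ℝ) + 1))).sub
      (Metric.lipschitz_infDist_pt (tsupport f))).const_max 0
  set Cg : NNReal := Real.nnabs (C : ℝ) * (0 + 1) with hCgdef
  have hglip : ∀ j, LipschitzWith Cg (g j) := fun j =>
    lipschitzWith_const_smul (C : ℝ) (hgclip j)
  have hg_nonneg : ∀ j z, 0 ≤ g j z := by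
    intro j z
    rw [hgz]
    positivity
  -- the interpolating family
  set πj : ℕ → Fin m → Z → ℝ :=
    fun j i z => σ i z + max (-(g j z)) (min (π i z - σ i z) (g j z)) with hπjdef
  -- agreement near the support
  have hagree : ∀ (j : ℕ) (i : Fin m) (z : Z),
      infDist z (tsupport f) ≤ 1 / ((j : ℝ) + 1) → πj j i z = π i z := by
    intro j i z hz
    have hj1 : (0 : ℝ) < (j : ℝ) + 1 := by positivity
    have hd0 : 0 ≤ infDist z (tsupport f) := Metric.infDist_nonneg
    have hj2 : 1 / ((j : ℝ) + 1) ≤ 2 := by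
      rw [div_le_iff₀ hj1]; nlinarith [Nat.cast_nonneg (α := ℝ) j]
    have hzB : z ∈ B := by
      simp only [hBdef, Set.mem_setOf_eq]
      linarith
    have hgv : g j z = (C : ℝ) * (2 / ((j : ℝ) + 1) - infDist z (tsupport f)) := by
      rw [hgz, max_eq_right]
      have h12 : (1 : ℝ) / ((j : ℝ) + 1) ≤ 2 / ((j : ℝ) + 1) := by
        rw [div_le_div_iff₀ hj1 hj1]
        nlinarith
      linarith
    have h2j : (2 : ℝ) / ((j : ℝ) + 1) = 2 * (1 / ((j : ℝ) + 1)) := by ring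
    have habs : |π i z - σ i z| ≤ g j z := by
      refine (hhb i z hzB).trans ?_
      rw [hgv]
      apply mul_le_mul_of_nonneg_left ?_ hC0
      rw [h2j]
      linarith
    obtain ⟨ha1, ha2⟩ := abs_le.mp habs
    simp only [hπjdef]
    rw [min_eq_left ha2, max_eq_right ha1]
    ring
  -- local Lipschitz property of the interpolants
  have hπjloc : ∀ (j : ℕ) (i : Fin m), LipLoc (πj j i) := by
    intro j i s hs
    obtain ⟨Ls, hLs⟩ := hπ i s hs
    have hσs : LipschitzOnWith (K i) (σ i) s := (hσlip i).lipschitzOnWith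
    have hh : LipschitzOnWith (Ls + K i) (fun z => π i z - σ i z) s := hLs.sub hσs
    have hgs : LipschitzOnWith Cg (g j) s := (hglip j).lipschitzOnWith
    have hmin := lipOnWith_min hh hgs
    have hneg : LipschitzOnWith Cg (fun z => -(g j z)) s := lipOnWith_neg hgs
    have hmax := lipOnWith_max hneg hmin
    have hadd := hσs.add hmax
    exact ⟨K i + (Cg ⊔ ((Ls + K i) ⊔ Cg)), hadd⟩
  -- uniform Lipschitz bounds on bounded sets
  have huniform : ∀ s : Set Z, IsBounded s →
      ∃ Ku : NNReal, ∀ (i : Fin m) (j : ℕ), LipschitzOnWith Ku (πj j i) s := by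
    intro s hs
    set Ls : Fin m → NNReal := fun i => (hπ i s hs).choose with hLsdef
    have hLs : ∀ i, LipschitzOnWith (Ls i) (π i) s := fun i => (hπ i s hs).choose_spec
    refine ⟨Finset.univ.sup (fun i => K i + (Cg ⊔ ((Ls i + K i) ⊔ Cg))), ?_⟩
    intro i j
    have hσs : LipschitzOnWith (K i) (σ i) s := (hσlip i).lipschitzOnWith
    have hh : LipschitzOnWith (Ls i + K i) (fun z => π i z - σ i z) s := (hLs i).sub hσs
    have hgs : LipschitzOnWith Cg (g j) s := (hglip j).lipschitzOnWith
    have hmax := lipOnWith_max (lipOnWith_neg hgs) (lipOnWith_min hh hgs)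
    exact lipOnWith_weaken (hσs.add hmax)
      (Finset.le_sup (f := fun i => K i + (Cg ⊔ ((Ls i + K i) ⊔ Cg))) (Finset.mem_univ i))
  -- pointwise convergence to the extension
  have hptwise : ∀ (i : Fin m) (z : Z), Tendsto (fun j => πj j i z) atTop (𝓝 (σ i z)) := by
    intro i z
    by_cases hzS : z ∈ tsupport f
    · have he : ∀ j : ℕ, πj j i z = σ i z := by
        intro j
        rw [hagree j i z (by rw [infDist_zero_of_mem hzS]; positivity)]
        exact hσeq i hzS
      exact Tendsto.congr (fun j => (he j).symm) tendsto_const_nhds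
    · have hd : 0 < infDist z (tsupport f) := (hSclosed.notMem_iff_infDist_pos hSne).mp hzS
      apply tendsto_atTop_of_eventually_const
        (i₀ := Nat.ceil (2 / infDist z (tsupport f)))
      intro j hj
      have hj1 : 2 / infDist z (tsupport f) ≤ (j : ℝ) :=
        le_trans (Nat.le_ceil _) (by exact_mod_cast hj)
      have hgj0 : g j z = 0 := by
        rw [hgz]
        have h13 : 2 / ((j : ℝ) + 1) ≤ infDist z (tsupport f) := by
          rw [div_le_iff₀ (by positivity)]
          rw [div_le_iff₀ hd] at hj1
          nlinarith
        rw [max_eq_left (by linarith), mul_zero]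
      simp only [hπjdef, hgj0, neg_zero]
      rcases le_total (π i z - σ i z) 0 with hc | hc
      · rw [min_eq_left hc, max_eq_left hc, add_zero]
      · rw [min_eq_right hc, max_self, add_zero]
  -- locality: T f (πj j) = T f π
  have hTeq : ∀ j : ℕ, T f (πj j) = T f π := by
    intro j
    exact T_locality_eq hT hf (fun i => hπjloc j i) hπ
      (show (0 : ℝ) < 1 / ((j : ℝ) + 1) by positivity)
      (fun i z hz => hagree j i z hz)
  have hconv := hT.2.1 f σ πj hf hσloc (fun j i => hπjloc j i) hptwise huniform
  have hconst : Tendsto (fun _ : ℕ => T f π) atTop (𝓝 (T f σ)) :=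
    Tendsto.congr (fun j => hTeq j) hconv
  have hTfσ : T f π = T f σ := tendsto_nhds_unique tendsto_const_nhds hconst
  -- degenerate case: some K i = 0
  by_cases hK0 : ∃ i, K i = 0
  · obtain ⟨i0, hi0⟩ := hK0
    have hconst0 : ∀ z w : Z, σ i0 z = σ i0 w := by
      intro z w
      have h9 := (hσlip i0).dist_le_mul z w
      rw [hi0] at h9
      simp only [NNReal.coe_zero, zero_mul, ENNReal.coe_zero] at h9
      exact dist_le_zero.mp (by simpa using h9)
    have h0 : T f σ = 0 := hT.2.2 f σ hf hσloc ⟨i0, 1, one_pos, fun z w _ _ => hconst0 z w⟩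
    rw [hTfσ, h0, abs_zero]
    simp
  push_neg at hK0
  -- scaling to the unit-Lipschitz case
  set τ : Fin m → Z → ℝ := fun i => ((K i : ℝ))⁻¹ • σ i with hτdef
  have hτ1 : ∀ i, LipschitzWith 1 (τ i) := by
    intro i
    have hKpos : (0 : ℝ) < (K i : ℝ) := by
      have := hK0 i
      positivity
    have h10 := lipschitzWith_const_smul ((K i : ℝ))⁻¹ (hσlip i)
    have he : Real.nnabs ((K i : ℝ))⁻¹ * K i = 1 := by
      apply NNReal.coe_injective
      push_cast [Real.coe_nnabs]
      rw [abs_of_nonneg (by positivity)]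
      field_simp
    rw [he] at h10
    exact h10
  have hτloc : ∀ i, LipLoc (τ i) := fun i => lipLoc_of_lipschitzWith (hτ1 i)
  have hστ : σ = fun i => ((K i : ℝ)) • τ i := by
    funext i z
    have hKne : (K i : ℝ) ≠ 0 := by
      have := hK0 i
      positivity
    simp only [hτdef, Pi.smul_apply, smul_eq_mul]
    field_simp
  have hscale : T f σ = (∏ i, (K i : ℝ)) * T f τ := by
    conv_lhs => rw [hστ]
    exact T_scale hT.1 hf hτloc (fun i => (K i : ℝ))
  have hcore := core_bound hT hTloc μ hμ f τ hf hτ1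
  have hprod0 : (0 : ℝ) ≤ ∏ i, (K i : ℝ) := Finset.prod_nonneg fun i _ => (K i).2
  have habs : |T f π| = (∏ i, (K i : ℝ)) * |T f τ| := by
    rw [hTfσ, hscale, abs_mul, abs_of_nonneg hprod0]
  rw [habs, ENNReal.ofReal_mul hprod0]
  have hprod : ENNReal.ofReal (∏ i, (K i : ℝ)) = ∏ i, (K i : ℝ≥0∞) := by
    rw [← NNReal.coe_prod, ENNReal.ofReal_coe_nnreal, ENNReal.coe_finset_prod]
  rw [hprod]
  exact mul_le_mul_right hcore _
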